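/- The minimum value of the function f_4(t) = 4t^3 + (1-t)^4 - t^4 on the interval [0, 1/2] equals 1/3; consequently the operator norm of C - I on ℓ^4 equals 3^{1/4}, i.e., m_4 = 1/3. -/

import Mathlib

open Filter Finset Topology


lemma habs4 (a : ℝ) : |a| ^ (4:ℝ) = a^4 := by
  rw [show (4:ℝ) = ((4:ℕ):ℝ) by norm_num, Real.rpow_natCast]
  exact Even.pow_abs ⟨2, rfl⟩ a

lemma poly_key (N u z : ℝ) (hN : 1 ≤ N) :
    (N-1)^4*(z-u)^4 + 3*N*((N-1)*u+z)^4 ≤ 3*N^4*z^4 + 3*N^4*(N-1)*u^4 := by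
  have hm : 0 ≤ N - 1 := by linarith
  have hid : 3*N^4*z^4 + 3*N^4*(N-1)*u^4 - ((N-1)^4*(z-u)^4 + 3*N*((N-1)*u+z)^4)
      = (N-1)*( (z-u)^2*((3*(z-u)+4*u)^2+2*u^2)
        + (N-1)*((z-u)^2*(2*(3*(z-u)+5*u)^2+4*u^2))
        + (N-1)^2*((z-u)^2*(12*((z-u)+2*u)^2+6*u^2))
        + (N-1)^3*((z-u)^2*(2*((z-u)+3*u)^2)) ) := by ring
  nlinarith [mul_nonneg hm (add_nonneg (add_nonneg (add_nonneg
    (by positivity : (0:ℝ) ≤ (z-u)^2*((3*(z-u)+4*u)^2+2*u^2))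
    (mul_nonneg hm (by positivity : (0:ℝ) ≤ (z-u)^2*(2*(3*(z-u)+5*u)^2+4*u^2))))
    (mul_nonneg (by positivity : (0:ℝ) ≤ (N-1)^2) (by positivity : (0:ℝ) ≤ (z-u)^2*(12*((z-u)+2*u)^2+6*u^2))))
    (mul_nonneg (pow_nonneg hm 3) (by positivity : (0:ℝ) ≤ (z-u)^2*(2*((z-u)+3*u)^2))))]

lemma key2 (N u z : ℝ) (hN : 1 ≤ N) :
    (((N-1)*u + z)/N - z)^4 + 3*N*(((N-1)*u + z)/N)^4 ≤ 3*z^4 + 3*(N-1)*u^4 := by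
  have hN0 : (0:ℝ) < N := by linarith
  have h4 : (0:ℝ) < N^4 := by positivity
  have key := poly_key N u z hN
  calc (((N-1)*u + z)/N - z)^4 + 3*N*(((N-1)*u + z)/N)^4
      = ((N-1)^4*(z-u)^4 + 3*N*((N-1)*u+z)^4)/N^4 := by field_simp; ring
    _ ≤ (3*N^4*z^4 + 3*N^4*(N-1)*u^4)/N^4 := by gcongr
    _ = 3*z^4 + 3*(N-1)*u^4 := by field_simp


-- Bernoulli consequences
lemma bern_lb (a : ℝ) (ha : 1 ≤ a) : a^11 + 11*a^10 ≤ (a+1)^11 := by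
  have ha0 : (0:ℝ) < a := by linarith
  have h := one_add_mul_le_pow (a := 1/a) (le_trans (by norm_num : (-2:ℝ) ≤ 0) (by positivity)) 11
  -- h : 1 + 11 * (1/a) ≤ (1 + 1/a)^11
  have h2 : a^11 * (1 + 11 * (1/a)) ≤ a^11 * (1 + 1/a)^11 := by
    apply mul_le_mul_of_nonneg_left h (by positivity)
  have e1 : a^11 * (1 + 11 * (1/a)) = a^11 + 11*a^10 := by field_simp
  have e2 : a^11 * (1 + 1/a)^11 = (a+1)^11 := by
    rw [← mul_pow]; congr 1; field_simp
  rw [e1, e2] at h2; exact h2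

lemma bern_ub (a : ℝ) (ha : 1 ≤ a) : (a+1)^11 ≤ a^11 + 11*(a+1)^10 := by
  have hb0 : (0:ℝ) < a + 1 := by linarith
  have hle1 : 1/(a+1) ≤ 1 := by rw [div_le_one hb0]; linarith
  have h := one_add_mul_le_pow (a := -(1/(a+1))) (by linarith : (-2:ℝ) ≤ -(1/(a+1))) 11
  have h2 : (a+1)^11 * (1 + 11 * (-(1/(a+1)))) ≤ (a+1)^11 * (1 + -(1/(a+1)))^11 := by
    apply mul_le_mul_of_nonneg_left h (by positivity)
  have e1 : (a+1)^11 * (1 + 11 * (-(1/(a+1)))) = (a+1)^11 - 11*(a+1)^10 := by field_simp; ring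
  have e2 : (a+1)^11 * (1 + -(1/(a+1)))^11 = a^11 := by
    rw [← mul_pow]; congr 1; field_simp; ring
  rw [e1, e2] at h2; linarith

lemma lemA (a : ℝ) (ha : 1 ≤ a) : 11/(a+1)^12 ≤ 1/a^11 - 1/(a+1)^11 := by
  have ha0 : (0:ℝ) < a := by linarith
  have hb0 : (0:ℝ) < a + 1 := by linarith
  have h := bern_lb a ha
  rw [div_sub_div _ _ (by positivity) (by positivity), div_le_div_iff₀ (by positivity) (by positivity)]
  nlinarith [pow_pos ha0 11, pow_pos hb0 11, pow_pos ha0 10, pow_pos hb0 12,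
    mul_le_mul_of_nonneg_left h (le_of_lt (pow_pos ha0 11))]

lemma lemB (a : ℝ) (ha : 1 ≤ a) : 1/a^11 - 1/(a+1)^11 ≤ 11/a^12 := by
  have ha0 : (0:ℝ) < a := by linarith
  have hb0 : (0:ℝ) < a + 1 := by linarith
  have h := bern_ub a ha
  rw [div_sub_div _ _ (by positivity) (by positivity), div_le_div_iff₀ (by positivity) (by positivity)]
  nlinarith [pow_pos ha0 11, pow_pos hb0 11, pow_pos hb0 10, pow_pos ha0 12,
    mul_le_mul_of_nonneg_left h (le_of_lt (pow_pos ha0 12))]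



lemma part2 (x : ℕ → ℝ) (hs : Summable fun n : ℕ => |x (n + 1)| ^ (4 : ℝ)) :
    ∑' n : ℕ,
        |(1 / ((n : ℝ) + 1)) * (∑ k ∈ Finset.range (n + 1), x (k + 1)) - x (n + 1)| ^ (4 : ℝ)
      ≤ 3 * ∑' n : ℕ, |x (n + 1)| ^ (4 : ℝ) := by
  -- the polynomial form of each term
  have hfun : ∀ n : ℕ,
      |(1 / ((n : ℝ) + 1)) * (∑ k ∈ Finset.range (n + 1), x (k + 1)) - x (n + 1)| ^ (4 : ℝ)
      = ((∑ k ∈ Finset.range (n + 1), x (k + 1))/((n : ℝ) + 1) - x (n + 1))^4 := by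
    intro n; rw [habs4]; ring
  -- key pointwise step
  have key : ∀ n : ℕ,
      ((∑ k ∈ Finset.range (n + 1), x (k + 1))/((n : ℝ) + 1) - x (n + 1))^4
        + 3*((n:ℝ)+1)*((∑ k ∈ Finset.range (n + 1), x (k + 1))/((n : ℝ) + 1))^4
      ≤ 3*(x (n+1))^4 + 3*(n:ℝ)*((∑ k ∈ Finset.range n, x (k + 1))/(n:ℝ))^4 := by
    intro n
    have hnu : (n:ℝ) * ((∑ k ∈ Finset.range n, x (k + 1))/(n:ℝ))
        = ∑ k ∈ Finset.range n, x (k + 1) := by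
      rcases Nat.eq_zero_or_pos n with h | h
      · simp [h]
      · have : (n:ℝ) ≠ 0 := by positivity
        field_simp
    have h := key2 ((n:ℝ)+1) ((∑ k ∈ Finset.range n, x (k + 1))/(n:ℝ)) (x (n+1))
      (by linarith [Nat.cast_nonneg (α := ℝ) n])
    rw [show (n:ℝ)+1-1 = (n:ℝ) by ring, hnu, ← Finset.sum_range_succ (fun k => x (k+1)) n] at h
    exact h
  -- partial sums with telescoping weight
  have main : ∀ M : ℕ,
      (∑ n ∈ Finset.range M,
        ((∑ k ∈ Finset.range (n + 1), x (k + 1))/((n : ℝ) + 1) - x (n + 1))^4)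
        + 3*(M:ℝ)*((∑ k ∈ Finset.range M, x (k + 1))/(M:ℝ))^4
      ≤ 3 * ∑ n ∈ Finset.range M, (x (n+1))^4 := by
    intro M
    induction M with
    | zero => simp
    | succ M ih =>
      rw [Finset.sum_range_succ (fun n => ((∑ k ∈ Finset.range (n + 1), x (k + 1))/((n : ℝ) + 1) - x (n + 1))^4) M,
          Finset.sum_range_succ (fun n => (x (n+1))^4) M]
      have := key M
      push_cast
      push_cast at ih this
      linarith
  -- bound partial sums by the tsum
  have hbound : ∀ M : ℕ,
      ∑ n ∈ Finset.range M,
        ((∑ k ∈ Finset.range (n + 1), x (k + 1))/((n : ℝ) + 1) - x (n + 1))^4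
      ≤ 3 * ∑' n : ℕ, |x (n + 1)| ^ (4 : ℝ) := by
    intro M
    have h1 := main M
    have h2 : (0:ℝ) ≤ 3*(M:ℝ)*((∑ k ∈ Finset.range M, x (k + 1))/(M:ℝ))^4 := by positivity
    have h3 : ∑ n ∈ Finset.range M, (x (n+1))^4 ≤ ∑' n : ℕ, |x (n + 1)| ^ (4 : ℝ) := by
      have : ∀ n ∈ Finset.range M, (x (n+1))^4 = |x (n + 1)| ^ (4 : ℝ) := by
        intro n _; rw [habs4]
      rw [Finset.sum_congr rfl this]
      exact hs.sum_le_tsum _ (fun i _ => by rw [habs4]; positivity)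
    linarith
  rw [tsum_congr hfun]
  exact Real.tsum_le_of_sum_range_le (fun n => by positivity) hbound




lemma cube1 (m : ℝ) (h : 5 ≤ m) : (m-2)^3 ≤ m*(m-1)*(m-2) := by nlinarith
lemma cube2 (m : ℝ) (h : 5 ≤ m) : (m-2)^3 ≤ (m+1)*(m-1)*(m-2) := by nlinarith
lemma cube3 (m : ℝ) (h : 5 ≤ m) : (m+1)*(m-1)*(m-2) ≤ (m+1)^3 := by nlinarith

set_option maxHeartbeats 2000000 in
lemma part3 (c : ℝ) (hc : c < 3) :
    ∃ x : ℕ → ℝ,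
      (Summable fun n : ℕ => |x (n + 1)| ^ (4 : ℝ)) ∧
      0 < ∑' n : ℕ, |x (n + 1)| ^ (4 : ℝ) ∧
      c * ∑' n : ℕ, |x (n + 1)| ^ (4 : ℝ) <
        ∑' n : ℕ,
          |(1 / ((n : ℝ) + 1)) * (∑ k ∈ Finset.range (n + 1), x (k + 1)) - x (n + 1)| ^ (4 : ℝ) := by
  -- choose a large cutoff n0 using continuity
  set Φ : ℝ → ℝ := fun t => 81*(1-t)^4*(1-2*t)^4*(1-3*t)^11 - 11*c*(1+t)^11*(1-3*t)^11
      - 16*c*(1-t)^4*(1-2*t)^4*(1+t)^11 with hΦdef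
  have hcont : Continuous Φ := by rw [hΦdef]; continuity
  have hΦ0 : Φ 0 = 81 - 27*c := by rw [hΦdef]; norm_num; ring
  have htends : Tendsto (fun n : ℕ => Φ (1/(n:ℝ))) atTop (𝓝 (Φ 0)) :=
    (hcont.tendsto 0).comp tendsto_one_div_atTop_nhds_zero_nat
  have hev : ∀ᶠ n : ℕ in atTop, 0 < Φ (1/(n:ℝ)) :=
    (tendsto_order.1 htends).1 0 (by rw [hΦ0]; linarith)
  obtain ⟨n0, hΦpos, hn5⟩ := (hev.and (eventually_ge_atTop 5)).exists
  have hν5 : (5:ℝ) ≤ (n0:ℝ) := by exact_mod_cast hn5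
  have hν0 : (0:ℝ) < (n0:ℝ) := by linarith
  have hν1 : (0:ℝ) < (n0:ℝ) - 1 := by linarith
  have hν2 : (0:ℝ) < (n0:ℝ) - 2 := by linarith
  have hν3 : (0:ℝ) < (n0:ℝ) - 3 := by linarith
  have hνp : (0:ℝ) < (n0:ℝ) + 1 := by linarith
  set P : ℝ := (n0:ℝ)*((n0:ℝ)-1)*((n0:ℝ)-2) with hPdef
  have hP : 0 < P := by rw [hPdef]; positivity
  -- positivity of the key polynomial quantity
  have hΨpos : 0 < 81*P^4*((n0:ℝ)-3)^11 - 11*c*(n0:ℝ)*((n0:ℝ)+1)^11*((n0:ℝ)-3)^11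
      - 16*c*P^4*((n0:ℝ)+1)^11 := by
    have hid : 81*P^4*((n0:ℝ)-3)^11 - 11*c*(n0:ℝ)*((n0:ℝ)+1)^11*((n0:ℝ)-3)^11
        - 16*c*P^4*((n0:ℝ)+1)^11 = (n0:ℝ)^23 * Φ (1/(n0:ℝ)) := by
      rw [hΦdef, hPdef]
      have hne : (n0:ℝ) ≠ 0 := ne_of_gt hν0
      field_simp
    rw [hid]
    exact mul_pos (pow_pos hν0 23) hΦpos
  -- the sequence
  set x : ℕ → ℝ := fun m => if m ≤ n0 then (1:ℝ)
      else -2*P/(((m:ℝ)-1)*((m:ℝ)-2)*((m:ℝ)-3)) with hxdef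
  -- partial sums of x
  have hSle : ∀ m, m ≤ n0 → ∑ k ∈ Finset.range m, x (k+1) = (m:ℝ) := by
    intro m
    induction m with
    | zero => intro _; simp
    | succ m ih =>
      intro h
      rw [Finset.sum_range_succ, ih (le_trans (Nat.le_succ m) h)]
      have hx1 : x (m+1) = 1 := by simp only [hxdef, if_pos h]
      rw [hx1]; push_cast; ring
  have hSge : ∀ m, n0 ≤ m → ∑ k ∈ Finset.range m, x (k+1) = P/(((m:ℝ)-1)*((m:ℝ)-2)) := by
    intro m hm
    induction m, hm using Nat.le_induction with
    | base =>
      rw [hSle n0 le_rfl, hPdef]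
      field_simp
    | succ m hm ih =>
      have hμ : (n0:ℝ) ≤ (m:ℝ) := by exact_mod_cast hm
      have h1 : (m:ℝ) ≠ 0 := by linarith
      have h2 : (m:ℝ) - 1 ≠ 0 := by linarith
      have h3 : (m:ℝ) - 2 ≠ 0 := by linarith
      have hx1 : x (m+1) = -2*P/((m:ℝ)*((m:ℝ)-1)*((m:ℝ)-2)) := by
        simp only [hxdef, if_neg (by omega : ¬ (m+1 ≤ n0))]
        push_cast
        ring
      rw [Finset.sum_range_succ, ih, hx1]
      push_cast
      rw [show ((m:ℝ)+1-1) = (m:ℝ) by ring, show ((m:ℝ)+1-2) = (m:ℝ)-1 by ring]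
      field_simp
      ring
  -- nonnegativity of terms
  have hdnn : ∀ n : ℕ, 0 ≤ |x (n+1)| ^ (4:ℝ) := fun n => Real.rpow_nonneg (abs_nonneg _) _
  have hnnn : ∀ n : ℕ, 0 ≤ |1/((n:ℝ)+1) * (∑ k ∈ Finset.range (n+1), x (k+1)) - x (n+1)| ^ (4:ℝ) :=
    fun n => Real.rpow_nonneg (abs_nonneg _) _
  -- term values
  have hden_head : ∀ n : ℕ, n+1 ≤ n0 → |x (n+1)| ^ (4:ℝ) = 1 := by
    intro n h
    simp only [hxdef, if_pos h]
    simp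
  have hden_tail : ∀ n : ℕ, n0 ≤ n →
      |x (n+1)| ^ (4:ℝ) = 16*P^4/((n:ℝ)*((n:ℝ)-1)*((n:ℝ)-2))^4 := by
    intro n h
    have hμ : (n0:ℝ) ≤ (n:ℝ) := by exact_mod_cast h
    rw [habs4]
    simp only [hxdef, if_neg (by omega : ¬ (n+1 ≤ n0))]
    push_cast
    rw [show ((n:ℝ)+1-1) = (n:ℝ) by ring, show ((n:ℝ)+1-2) = (n:ℝ)-1 by ring,
        show ((n:ℝ)+1-3) = (n:ℝ)-2 by ring, div_pow]
    congr 1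
    ring
  have hnum_head : ∀ n : ℕ, n+1 ≤ n0 →
      |1/((n:ℝ)+1) * (∑ k ∈ Finset.range (n+1), x (k+1)) - x (n+1)| ^ (4:ℝ) = 0 := by
    intro n h
    have hx1 : x (n+1) = 1 := by simp only [hxdef, if_pos h]
    have hne : (n:ℝ)+1 ≠ 0 := by positivity
    rw [hSle (n+1) h, hx1]
    push_cast
    rw [show 1/((n:ℝ)+1) * ((n:ℝ)+1) - 1 = 0 by field_simp; ring]
    simp
  have hnum_tail : ∀ n : ℕ, n0 ≤ n →
      |1/((n:ℝ)+1) * (∑ k ∈ Finset.range (n+1), x (k+1)) - x (n+1)| ^ (4:ℝ)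
        = 81*P^4/(((n:ℝ)+1)*((n:ℝ)-1)*((n:ℝ)-2))^4 := by
    intro n h
    have hμ : (n0:ℝ) ≤ (n:ℝ) := by exact_mod_cast h
    have h1 : (n:ℝ) ≠ 0 := by linarith
    have h2 : (n:ℝ)-1 ≠ 0 := by linarith
    have h3 : (n:ℝ)-2 ≠ 0 := by linarith
    have h4 : (n:ℝ)+1 ≠ 0 := by positivity
    have hx1 : x (n+1) = -2*P/((n:ℝ)*((n:ℝ)-1)*((n:ℝ)-2)) := by
      simp only [hxdef, if_neg (by omega : ¬ (n+1 ≤ n0))]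
      push_cast
      ring
    rw [hSge (n+1) (le_trans h (Nat.le_succ n)), hx1, habs4]
    push_cast
    rw [show ((n:ℝ)+1-1) = (n:ℝ) by ring, show ((n:ℝ)+1-2) = (n:ℝ)-1 by ring]
    rw [show 1/((n:ℝ)+1) * (P/((n:ℝ)*((n:ℝ)-1))) - -2*P/((n:ℝ)*((n:ℝ)-1)*((n:ℝ)-2))
        = 3*P/(((n:ℝ)+1)*((n:ℝ)-1)*((n:ℝ)-2)) from by field_simp; ring, div_pow]
    congr 1
    ring
  -- per-term telescoping bounds
  have hden_step : ∀ n : ℕ, n0 ≤ n →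
      |x (n+1)| ^ (4:ℝ) ≤ (16*P^4/11) * (1/((n:ℝ)-3)^11 - 1/((n:ℝ)-2)^11) := by
    intro n h
    have hμ : (n0:ℝ) ≤ (n:ℝ) := by exact_mod_cast h
    have hm2 : (0:ℝ) < (n:ℝ)-2 := by linarith
    rw [hden_tail n h]
    have h1 : ((n:ℝ)-2)^3 ≤ (n:ℝ)*((n:ℝ)-1)*((n:ℝ)-2) := cube1 _ (le_trans hν5 hμ)
    have h2 : (((n:ℝ)-2)^3)^4 ≤ ((n:ℝ)*((n:ℝ)-1)*((n:ℝ)-2))^4 :=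
      pow_le_pow_left₀ (pow_nonneg hm2.le 3) h1 4
    rw [← pow_mul] at h2
    norm_num at h2
    have h3 : 16*P^4/((n:ℝ)*((n:ℝ)-1)*((n:ℝ)-2))^4 ≤ 16*P^4/((n:ℝ)-2)^12 :=
      div_le_div_of_nonneg_left (by positivity) (pow_pos hm2 12) h2
    have h4 := lemA ((n:ℝ)-3) (by linarith)
    rw [show (n:ℝ)-3+1 = (n:ℝ)-2 by ring] at h4
    calc 16*P^4/((n:ℝ)*((n:ℝ)-1)*((n:ℝ)-2))^4 ≤ 16*P^4/((n:ℝ)-2)^12 := h3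
      _ = (16*P^4/11) * (11/((n:ℝ)-2)^12) := by ring
      _ ≤ (16*P^4/11) * (1/((n:ℝ)-3)^11 - 1/((n:ℝ)-2)^11) :=
          mul_le_mul_of_nonneg_left h4 (by positivity)
  have hnum_stepub : ∀ n : ℕ, n0 ≤ n →
      |1/((n:ℝ)+1) * (∑ k ∈ Finset.range (n+1), x (k+1)) - x (n+1)| ^ (4:ℝ)
        ≤ (81*P^4/11) * (1/((n:ℝ)-3)^11 - 1/((n:ℝ)-2)^11) := by
    intro n h
    have hμ : (n0:ℝ) ≤ (n:ℝ) := by exact_mod_cast h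
    have hm2 : (0:ℝ) < (n:ℝ)-2 := by linarith
    rw [hnum_tail n h]
    have h1 : ((n:ℝ)-2)^3 ≤ ((n:ℝ)+1)*((n:ℝ)-1)*((n:ℝ)-2) := cube2 _ (le_trans hν5 hμ)
    have h2 : (((n:ℝ)-2)^3)^4 ≤ (((n:ℝ)+1)*((n:ℝ)-1)*((n:ℝ)-2))^4 :=
      pow_le_pow_left₀ (pow_nonneg hm2.le 3) h1 4
    rw [← pow_mul] at h2
    norm_num at h2
    have h3 : 81*P^4/(((n:ℝ)+1)*((n:ℝ)-1)*((n:ℝ)-2))^4 ≤ 81*P^4/((n:ℝ)-2)^12 :=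
      div_le_div_of_nonneg_left (by positivity) (pow_pos hm2 12) h2
    have h4 := lemA ((n:ℝ)-3) (by linarith)
    rw [show (n:ℝ)-3+1 = (n:ℝ)-2 by ring] at h4
    calc 81*P^4/(((n:ℝ)+1)*((n:ℝ)-1)*((n:ℝ)-2))^4 ≤ 81*P^4/((n:ℝ)-2)^12 := h3
      _ = (81*P^4/11) * (11/((n:ℝ)-2)^12) := by ring
      _ ≤ (81*P^4/11) * (1/((n:ℝ)-3)^11 - 1/((n:ℝ)-2)^11) :=
          mul_le_mul_of_nonneg_left h4 (by positivity)
  have hnum_steplb : ∀ n : ℕ, n0 ≤ n →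
      (81*P^4/11) * (1/((n:ℝ)+1)^11 - 1/((n:ℝ)+2)^11)
        ≤ |1/((n:ℝ)+1) * (∑ k ∈ Finset.range (n+1), x (k+1)) - x (n+1)| ^ (4:ℝ) := by
    intro n h
    have hμ : (n0:ℝ) ≤ (n:ℝ) := by exact_mod_cast h
    have hp1 : (0:ℝ) < (n:ℝ)+1 := by linarith
    have hm1 : (0:ℝ) < (n:ℝ)-1 := by linarith
    have hm2 : (0:ℝ) < (n:ℝ)-2 := by linarith
    rw [hnum_tail n h]
    have h1 : ((n:ℝ)+1)*((n:ℝ)-1)*((n:ℝ)-2) ≤ ((n:ℝ)+1)^3 := cube3 _ (le_trans hν5 hμ)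
    have h2 : (((n:ℝ)+1)*((n:ℝ)-1)*((n:ℝ)-2))^4 ≤ (((n:ℝ)+1)^3)^4 :=
      pow_le_pow_left₀ (by positivity) h1 4
    rw [← pow_mul] at h2
    norm_num at h2
    have h3 : 81*P^4/((n:ℝ)+1)^12 ≤ 81*P^4/(((n:ℝ)+1)*((n:ℝ)-1)*((n:ℝ)-2))^4 :=
      div_le_div_of_nonneg_left (by positivity) (by positivity) h2
    have h4 := lemB ((n:ℝ)+1) (by linarith)
    rw [show (n:ℝ)+1+1 = (n:ℝ)+2 by ring] at h4
    calc (81*P^4/11) * (1/((n:ℝ)+1)^11 - 1/((n:ℝ)+2)^11)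
        ≤ (81*P^4/11) * (11/((n:ℝ)+1)^12) := mul_le_mul_of_nonneg_left h4 (by positivity)
      _ = 81*P^4/((n:ℝ)+1)^12 := by ring
      _ ≤ 81*P^4/(((n:ℝ)+1)*((n:ℝ)-1)*((n:ℝ)-2))^4 := h3
  -- partial sums of the denominator terms
  have hden_sum_head : ∀ K, K ≤ n0 → ∑ n ∈ Finset.range K, |x (n+1)| ^ (4:ℝ) = (K:ℝ) := by
    intro K
    induction K with
    | zero => intro _; simp
    | succ K ih =>
      intro h
      rw [Finset.sum_range_succ, ih (le_trans (Nat.le_succ K) h), hden_head K h]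
      push_cast; ring
  have hden_sum_ge : ∀ K, n0 ≤ K → ∑ n ∈ Finset.range K, |x (n+1)| ^ (4:ℝ)
      ≤ (n0:ℝ) + (16*P^4/11)*(1/((n0:ℝ)-3)^11 - 1/((K:ℝ)-3)^11) := by
    intro K hK
    induction K, hK using Nat.le_induction with
    | base =>
      rw [hden_sum_head n0 le_rfl, sub_self, mul_zero, add_zero]
    | succ K hK ih =>
      have step := hden_step K hK
      rw [Finset.sum_range_succ]
      push_cast
      rw [show (K:ℝ)+1-3 = (K:ℝ)-2 by ring]
      have e : (16*P^4/11)*(1/((n0:ℝ)-3)^11 - 1/((K:ℝ)-2)^11)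
          = (16*P^4/11)*(1/((n0:ℝ)-3)^11 - 1/((K:ℝ)-3)^11)
            + (16*P^4/11)*(1/((K:ℝ)-3)^11 - 1/((K:ℝ)-2)^11) := by ring
      rw [e]
      linarith
  have hden_total : ∀ K, ∑ n ∈ Finset.range K, |x (n+1)| ^ (4:ℝ)
      ≤ (n0:ℝ) + (16*P^4/11)*(1/((n0:ℝ)-3)^11) := by
    intro K
    have hpos1 : (0:ℝ) ≤ (16*P^4/11)*(1/((n0:ℝ)-3)^11) :=
      mul_nonneg (by positivity) (le_of_lt (div_pos one_pos (pow_pos hν3 11)))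
    rcases le_total K n0 with h | h
    · rw [hden_sum_head K h]
      have : (K:ℝ) ≤ (n0:ℝ) := by exact_mod_cast h
      linarith
    · have h1 := hden_sum_ge K h
      have hK5 : (5:ℝ) ≤ (K:ℝ) := le_trans hν5 (by exact_mod_cast h)
      have h2 : (0:ℝ) ≤ (16*P^4/11)*(1/((K:ℝ)-3)^11) :=
        mul_nonneg (by positivity) (le_of_lt (div_pos one_pos (pow_pos (by linarith) 11)))
      have e : (16*P^4/11)*(1/((n0:ℝ)-3)^11 - 1/((K:ℝ)-3)^11)
          = (16*P^4/11)*(1/((n0:ℝ)-3)^11) - (16*P^4/11)*(1/((K:ℝ)-3)^11) := by ring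
      rw [e] at h1
      linarith
  have hsum_den : Summable (fun n : ℕ => |x (n+1)| ^ (4:ℝ)) :=
    summable_of_sum_range_le hdnn hden_total
  have htsum_den_le : ∑' n : ℕ, |x (n+1)| ^ (4:ℝ)
      ≤ (n0:ℝ) + (16*P^4/11)*(1/((n0:ℝ)-3)^11) :=
    Real.tsum_le_of_sum_range_le hdnn hden_total
  have htsum_den_pos : 0 < ∑' n : ℕ, |x (n+1)| ^ (4:ℝ) := by
    have h0 : |x (0+1)| ^ (4:ℝ) = 1 := hden_head 0 (by omega)
    have h1 := hsum_den.le_tsum 0 (fun j _ => hdnn j)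
    rw [h0] at h1
    linarith
  -- partial sums of the numerator terms
  have hnum_sum_head : ∀ K, K ≤ n0 → ∑ n ∈ Finset.range K,
      |1/((n:ℝ)+1) * (∑ k ∈ Finset.range (n+1), x (k+1)) - x (n+1)| ^ (4:ℝ) = 0 := by
    intro K
    induction K with
    | zero => intro _; simp
    | succ K ih =>
      intro h
      rw [Finset.sum_range_succ, ih (le_trans (Nat.le_succ K) h), hnum_head K h]
      ring
  have hnum_sum_ge : ∀ K, n0 ≤ K → ∑ n ∈ Finset.range K,
      |1/((n:ℝ)+1) * (∑ k ∈ Finset.range (n+1), x (k+1)) - x (n+1)| ^ (4:ℝ)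
      ≤ (81*P^4/11)*(1/((n0:ℝ)-3)^11 - 1/((K:ℝ)-3)^11) := by
    intro K hK
    induction K, hK using Nat.le_induction with
    | base =>
      rw [hnum_sum_head n0 le_rfl, sub_self, mul_zero]
    | succ K hK ih =>
      have step := hnum_stepub K hK
      rw [Finset.sum_range_succ]
      push_cast
      rw [show (K:ℝ)+1-3 = (K:ℝ)-2 by ring]
      have e : (81*P^4/11)*(1/((n0:ℝ)-3)^11 - 1/((K:ℝ)-2)^11)
          = (81*P^4/11)*(1/((n0:ℝ)-3)^11 - 1/((K:ℝ)-3)^11)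
            + (81*P^4/11)*(1/((K:ℝ)-3)^11 - 1/((K:ℝ)-2)^11) := by ring
      rw [e]
      linarith
  have hnum_total : ∀ K, ∑ n ∈ Finset.range K,
      |1/((n:ℝ)+1) * (∑ k ∈ Finset.range (n+1), x (k+1)) - x (n+1)| ^ (4:ℝ)
      ≤ (81*P^4/11)*(1/((n0:ℝ)-3)^11) := by
    intro K
    have hpos1 : (0:ℝ) ≤ (81*P^4/11)*(1/((n0:ℝ)-3)^11) :=
      mul_nonneg (by positivity) (le_of_lt (div_pos one_pos (pow_pos hν3 11)))
    rcases le_total K n0 with h | h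
    · rw [hnum_sum_head K h]
      exact hpos1
    · have h1 := hnum_sum_ge K h
      have hK5 : (5:ℝ) ≤ (K:ℝ) := le_trans hν5 (by exact_mod_cast h)
      have h2 : (0:ℝ) ≤ (81*P^4/11)*(1/((K:ℝ)-3)^11) :=
        mul_nonneg (by positivity) (le_of_lt (div_pos one_pos (pow_pos (by linarith) 11)))
      have e : (81*P^4/11)*(1/((n0:ℝ)-3)^11 - 1/((K:ℝ)-3)^11)
          = (81*P^4/11)*(1/((n0:ℝ)-3)^11) - (81*P^4/11)*(1/((K:ℝ)-3)^11) := by ring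
      rw [e] at h1
      linarith
  have hsum_num : Summable (fun n : ℕ =>
      |1/((n:ℝ)+1) * (∑ k ∈ Finset.range (n+1), x (k+1)) - x (n+1)| ^ (4:ℝ)) :=
    summable_of_sum_range_le hnnn hnum_total
  have hnum_lb_partial : ∀ K, n0 ≤ K →
      (81*P^4/11)*(1/((n0:ℝ)+1)^11 - 1/((K:ℝ)+1)^11) ≤ ∑ n ∈ Finset.range K,
        |1/((n:ℝ)+1) * (∑ k ∈ Finset.range (n+1), x (k+1)) - x (n+1)| ^ (4:ℝ) := by
    intro K hK
    induction K, hK using Nat.le_induction with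
    | base =>
      rw [sub_self, mul_zero]
      exact Finset.sum_nonneg (fun i _ => hnnn i)
    | succ K hK ih =>
      have step := hnum_steplb K hK
      rw [Finset.sum_range_succ]
      push_cast
      rw [show (K:ℝ)+1+1 = (K:ℝ)+2 by ring]
      have e : (81*P^4/11)*(1/((n0:ℝ)+1)^11 - 1/((K:ℝ)+2)^11)
          = (81*P^4/11)*(1/((n0:ℝ)+1)^11 - 1/((K:ℝ)+1)^11)
            + (81*P^4/11)*(1/((K:ℝ)+1)^11 - 1/((K:ℝ)+2)^11) := by ring
      rw [e]
      linarith
  -- lower bound on the numerator tsum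
  have htsum_num_lb : (81*P^4/11)*(1/((n0:ℝ)+1)^11) ≤ ∑' n : ℕ,
      |1/((n:ℝ)+1) * (∑ k ∈ Finset.range (n+1), x (k+1)) - x (n+1)| ^ (4:ℝ) := by
    have hevle : ∀ᶠ K : ℕ in atTop,
        (81*P^4/11)*(1/((n0:ℝ)+1)^11 - 1/((K:ℝ)+1)^11) ≤ ∑' n : ℕ,
          |1/((n:ℝ)+1) * (∑ k ∈ Finset.range (n+1), x (k+1)) - x (n+1)| ^ (4:ℝ) :=
      (eventually_ge_atTop n0).mono (fun K hK => le_trans (hnum_lb_partial K hK)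
        (hsum_num.sum_le_tsum _ (fun i _ => hnnn i)))
    have h0 : Tendsto (fun K : ℕ => ((K:ℝ)+1)^11) atTop atTop :=
      (tendsto_pow_atTop (by norm_num : (11:ℕ) ≠ 0)).comp
        (tendsto_atTop_add_const_right atTop 1 tendsto_natCast_atTop_atTop)
    have h1 : Tendsto (fun K : ℕ => 1/((K:ℝ)+1)^11) atTop (𝓝 0) := by
      simp only [one_div]; exact h0.inv_tendsto_atTop
    have hlim : Tendsto (fun K : ℕ => (81*P^4/11)*(1/((n0:ℝ)+1)^11 - 1/((K:ℝ)+1)^11))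
        atTop (𝓝 ((81*P^4/11)*(1/((n0:ℝ)+1)^11 - 0))) :=
      (tendsto_const_nhds.sub h1).const_mul _
    have := le_of_tendsto hlim hevle
    simpa using this
  -- the final comparison
  have hd : (0:ℝ) < 11*((n0:ℝ)+1)^11*((n0:ℝ)-3)^11 :=
    mul_pos (mul_pos (by norm_num) (pow_pos hνp 11)) (pow_pos hν3 11)
  have hidd : (81*P^4/11)*(1/((n0:ℝ)+1)^11) - c * ((n0:ℝ) + (16*P^4/11)*(1/((n0:ℝ)-3)^11))
      = (81*P^4*((n0:ℝ)-3)^11 - 11*c*(n0:ℝ)*((n0:ℝ)+1)^11*((n0:ℝ)-3)^11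
          - 16*c*P^4*((n0:ℝ)+1)^11) / (11*((n0:ℝ)+1)^11*((n0:ℝ)-3)^11) := by
    have hne1 : ((n0:ℝ)+1) ≠ 0 := ne_of_gt hνp
    have hne3 : ((n0:ℝ)-3) ≠ 0 := ne_of_gt hν3
    field_simp
    ring
  have hkey : c * ((n0:ℝ) + (16*P^4/11)*(1/((n0:ℝ)-3)^11)) < (81*P^4/11)*(1/((n0:ℝ)+1)^11) := by
    have h5 := div_pos hΨpos hd
    rw [← hidd] at h5
    linarith
  refine ⟨x, hsum_den, htsum_den_pos, ?_⟩
  rcases le_or_gt c 0 with hc0 | hc0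
  · have h1 : c * ∑' n : ℕ, |x (n+1)| ^ (4:ℝ) ≤ 0 :=
      mul_nonpos_of_nonpos_of_nonneg hc0 (le_of_lt htsum_den_pos)
    have h2 : (0:ℝ) < (81*P^4/11)*(1/((n0:ℝ)+1)^11) :=
      mul_pos (by positivity) (div_pos one_pos (pow_pos hνp 11))
    linarith
  · calc c * ∑' n : ℕ, |x (n+1)| ^ (4:ℝ)
        ≤ c * ((n0:ℝ) + (16*P^4/11)*(1/((n0:ℝ)-3)^11)) :=
          mul_le_mul_of_nonneg_left htsum_den_le (le_of_lt hc0)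
      _ < (81*P^4/11)*(1/((n0:ℝ)+1)^11) := hkey
      _ ≤ _ := htsum_num_lb



/-- The case `p = 4`: the minimum value of `f_4(t) = 4t³ + (1-t)⁴ - t⁴` on `[0, 1/2]`
equals `1/3` (i.e. `m_4 = 1/3`); consequently the operator norm of `C - I` on `ℓ^4`
equals `3^(1/4)`, i.e. the inequality `∑ |y_n - x_n|⁴ ≤ 3 ∑ |x_n|⁴` holds with
`y_n = (1/n) ∑_{k=1}^n x_k`, and `3` is the least such constant. (Sequences are indexed
so that term `n` of the paper is `x (n+1)` here, `n : ℕ`.) -/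
theorem stmt19 :
    IsLeast ((fun t : ℝ => 4 * t ^ 3 + (1 - t) ^ 4 - t ^ 4) '' Set.Icc 0 (1 / 2))
      (1 / 3) ∧
    (∀ x : ℕ → ℝ, (Summable fun n : ℕ => |x (n + 1)| ^ (4 : ℝ)) →
      ∑' n : ℕ,
          |(1 / ((n : ℝ) + 1)) * (∑ k ∈ Finset.range (n + 1), x (k + 1)) - x (n + 1)| ^ (4 : ℝ)
        ≤ 3 * ∑' n : ℕ, |x (n + 1)| ^ (4 : ℝ)) ∧
    ∀ c : ℝ, c < 3 → ∃ x : ℕ → ℝ,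
      (Summable fun n : ℕ => |x (n + 1)| ^ (4 : ℝ)) ∧
      0 < ∑' n : ℕ, |x (n + 1)| ^ (4 : ℝ) ∧
      c * ∑' n : ℕ, |x (n + 1)| ^ (4 : ℝ) <
        ∑' n : ℕ,
          |(1 / ((n : ℝ) + 1)) * (∑ k ∈ Finset.range (n + 1), x (k + 1)) - x (n + 1)| ^ (4 : ℝ) := by
  refine ⟨⟨⟨1/3, ⟨by norm_num, by norm_num⟩, by norm_num⟩, ?_⟩, part2, fun c hc => part3 c hc⟩
  rintro v ⟨t, ⟨ht0, ht1⟩, rfl⟩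
  simp only
  nlinarith [sq_nonneg (t - 1/3)]
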